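/- Let c ∈ ℂ with c ∉ ℝ, and let e₀, e₁, e₂ ∈ ℂ³ be vectors whose Gram matrix with respect to ⟨-,-⟩ has rows (1,0,0), (0,0,c), (0, conj(c), 0), i.e. ⟨e₀,e₀⟩ = 1, ⟨e₁,e₂⟩ = c, ⟨e₂,e₁⟩ = conj(c), and all other pairings among e₀,e₁,e₂ vanish. Let W := ℝ·e₀ + ℝ·e₁ + ℝ·e₂ be their real span. Then for w ∈ W, one has Im⟨w', w⟩ = 0 for all w' ∈ W if and only if w ∈ ℝ·e₀. -/

import Mathlib

open Matrix Polynomial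

/-- The matrix `matJ` with rows `(1,0,0), (0,0,1), (0,1,0)`. -/
noncomputable def matJ : Matrix (Fin 3) (Fin 3) ℂ := !![1,0,0; 0,0,1; 0,1,0]

/-- The Hermitian form `⟨x,y⟩ = x₀ conj y₀ + x₁ conj y₂ + x₂ conj y₁` on `ℂ³`. -/
noncomputable def herm (x y : Fin 3 → ℂ) : ℂ :=
  x 0 * star (y 0) + x 1 * star (y 2) + x 2 * star (y 1)

/-- Membership in `SU(matJ)`: determinant one and `gᴴ matJ g = matJ`. -/
def InSUJ (g : Matrix (Fin 3) (Fin 3) ℂ) : Prop :=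
  g.det = 1 ∧ gᴴ * matJ * g = matJ

/-- `g` is loxodromic: it has an eigenvalue (root of its characteristic polynomial)
of modulus greater than `1`. -/
def Loxodromic (g : Matrix (Fin 3) (Fin 3) ℂ) : Prop :=
  ∃ μ : ℂ, g.charpoly.IsRoot μ ∧ 1 < ‖μ‖

/-- `G` is a subgroup of `SU(matJ)`. -/
def IsSubgroupOfSUJ (G : Set (Matrix (Fin 3) (Fin 3) ℂ)) : Prop :=
  (∀ g ∈ G, InSUJ g) ∧ (1 : Matrix (Fin 3) (Fin 3) ℂ) ∈ G ∧
    (∀ g ∈ G, ∀ h ∈ G, g * h ∈ G) ∧ (∀ g ∈ G, g⁻¹ ∈ G)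

/-- The trace condition: the trace of every loxodromic element of `G` lies in `ℝδ`
for some cubic root of unity `δ`. -/
def TraceCond (G : Set (Matrix (Fin 3) (Fin 3) ℂ)) : Prop :=
  ∀ g ∈ G, Loxodromic g → ∃ δ : ℂ, δ ^ 3 = 1 ∧ ∃ r : ℝ, g.trace = (r : ℂ) * δ

/-- A real subspace `W ⊆ ℂ³` is `G`-stable. -/
def StableR (G : Set (Matrix (Fin 3) (Fin 3) ℂ)) (W : Submodule ℝ (Fin 3 → ℂ)) : Prop :=
  ∀ g ∈ G, ∀ w ∈ W, g.mulVec w ∈ W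

/-- A complex subspace `W ⊆ ℂ³` is `G`-stable. -/
def StableC (G : Set (Matrix (Fin 3) (Fin 3) ℂ)) (W : Submodule ℂ (Fin 3 → ℂ)) : Prop :=
  ∀ g ∈ G, ∀ w ∈ W, g.mulVec w ∈ W

/-- A real subspace `W ⊆ ℂ³` is totally real when the form is real on it. -/
def TotallyReal (W : Submodule ℝ (Fin 3 → ℂ)) : Prop :=
  ∀ w ∈ W, ∀ w' ∈ W, (herm w w').im = 0

lemma herm_smul_left (r : ℝ) (x y : Fin 3 → ℂ) : herm (r • x) y = r * herm x y := by
  simp [herm, Pi.smul_apply, Complex.real_smul]; ring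

lemma herm_smul_right (r : ℝ) (x y : Fin 3 → ℂ) : herm x (r • y) = r * herm x y := by
  simp [herm, Pi.smul_apply, Complex.real_smul]; ring

lemma herm_add_left (x x' y : Fin 3 → ℂ) : herm (x + x') y = herm x y + herm x' y := by
  simp [herm]; ring

lemma herm_add_right (x y y' : Fin 3 → ℂ) : herm x (y + y') = herm x y + herm x y' := by
  simp [herm]; ring

theorem statement_17 (c : ℂ) (hc : ∀ r : ℝ, c ≠ (r : ℂ))
    (e₀ e₁ e₂ : Fin 3 → ℂ)
    (g00 : herm e₀ e₀ = 1) (g01 : herm e₀ e₁ = 0) (g02 : herm e₀ e₂ = 0)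
    (g10 : herm e₁ e₀ = 0) (g11 : herm e₁ e₁ = 0) (g12 : herm e₁ e₂ = c)
    (g20 : herm e₂ e₀ = 0) (g21 : herm e₂ e₁ = star c) (g22 : herm e₂ e₂ = 0)
    (W : Submodule ℝ (Fin 3 → ℂ))
    (hW : W = Submodule.span ℝ {e₀, e₁, e₂}) :
    ∀ w ∈ W, ((∀ w' ∈ W, (herm w' w).im = 0) ↔ ∃ r : ℝ, w = r • e₀) := by
  have hcim : c.im ≠ 0 := by
    intro h
    exact hc c.re (Complex.ext rfl (by simpa using h))
  have hmem : ∀ v ∈ W, ∃ a b d : ℝ, v = a • e₀ + b • e₁ + d • e₂ := by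
    intro v hv
    rw [hW] at hv
    rw [show ({e₀, e₁, e₂} : Set (Fin 3 → ℂ)) = insert e₀ {e₁, e₂} from rfl,
      Submodule.mem_span_insert] at hv
    obtain ⟨a, z, hz, hv⟩ := hv
    rw [Submodule.mem_span_pair] at hz
    obtain ⟨b, d, hz⟩ := hz
    exact ⟨a, b, d, by rw [hv, ← hz]; ring⟩
  have hE : ∀ (a b d : ℝ) (y : Fin 3 → ℂ),
      herm (a • e₀ + b • e₁ + d • e₂) y
        = a * herm e₀ y + b * herm e₁ y + d * herm e₂ y := by
    intro a b d y
    rw [herm_add_left, herm_add_left, herm_smul_left, herm_smul_left, herm_smul_left]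
  have hE' : ∀ (a b d : ℝ) (x : Fin 3 → ℂ),
      herm x (a • e₀ + b • e₁ + d • e₂)
        = a * herm x e₀ + b * herm x e₁ + d * herm x e₂ := by
    intro a b d x
    rw [herm_add_right, herm_add_right, herm_smul_right, herm_smul_right, herm_smul_right]
  intro w hw
  obtain ⟨a, b, d, hwd⟩ := hmem w hw
  constructor
  · intro h
    have he₁ : e₁ ∈ W := by
      rw [hW]; exact Submodule.subset_span (by simp)
    have he₂ : e₂ ∈ W := by
      rw [hW]; exact Submodule.subset_span (by simp)
    have h1 := h e₁ he₁
    have h2 := h e₂ he₂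
    rw [hwd, hE'] at h1 h2
    rw [g10, g11, g12] at h1
    rw [g20, g21, g22] at h2
    simp [Complex.add_im, Complex.mul_im] at h1 h2
    have hd : d = 0 := by
      rcases h1 with h1 | h1
      · exact h1
      · exact absurd h1 hcim
    have hb : b = 0 := by
      rcases h2 with h2 | h2
      · exact h2
      · exact absurd h2 hcim
    exact ⟨a, by rw [hwd, hb, hd]; simp⟩
  · rintro ⟨r, rfl⟩
    intro w' hw'
    obtain ⟨a', b', d', rfl⟩ := hmem w' hw'
    rw [herm_smul_right, hE, g00, g10, g20]
    simp
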